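/- Every bounded sequence σ : ℕ → ℂ that is uniformly continuous with respect to the sqrt-distance ρ(j,k) = |√j - √k| can be uniformly approximated by bounded sequences that are Lipschitz continuous with respect to ρ: for every ε > 0 there exists a bounded ρ-Lipschitz sequence y with ‖σ - y‖_∞ < ε. -/

import Mathlib

/-- McShane-type Lipschitz approximation for real sequences on (ℕ, ρ). -/
lemma mcshane_aux (g : ℕ → ℝ) (M e L : ℝ) (hM : ∀ n, |g n| ≤ M) (hL : 0 ≤ L)
    (key : ∀ j k : ℕ, g j ≤ g k + e + L * |Real.sqrt j - Real.sqrt k|) :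
    ∃ v : ℕ → ℝ, (∀ n, |v n| ≤ M) ∧
      (∀ j k : ℕ, |v j - v k| ≤ L * |Real.sqrt j - Real.sqrt k|) ∧
      (∀ n, |g n - v n| ≤ e) := by
  set v : ℕ → ℝ := fun n => ⨅ k, (g k + L * |Real.sqrt n - Real.sqrt k|) with hv
  have hbdd : ∀ n, BddBelow (Set.range fun k => g k + L * |Real.sqrt n - Real.sqrt k|) := by
    intro n
    refine ⟨-M, ?_⟩
    rintro x ⟨k, rfl⟩
    dsimp only
    have h1 : -M ≤ g k := neg_le_of_abs_le (hM k)
    have h2 : 0 ≤ L * |Real.sqrt n - Real.sqrt k| := by positivity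
    linarith
  have hle : ∀ n, v n ≤ g n := by
    intro n
    have := ciInf_le (hbdd n) n
    simpa using this
  have hge : ∀ n, g n - e ≤ v n := by
    intro n
    refine le_ciInf fun k => ?_
    have := key n k
    linarith
  have hlb : ∀ n, -M ≤ v n := by
    intro n
    refine le_ciInf fun k => ?_
    have h1 : -M ≤ g k := neg_le_of_abs_le (hM k)
    have h2 : 0 ≤ L * |Real.sqrt n - Real.sqrt k| := by positivity
    linarith
  have hlip : ∀ j k : ℕ, v j ≤ v k + L * |Real.sqrt j - Real.sqrt k| := by
    intro j k
    have : v j - L * |Real.sqrt j - Real.sqrt k| ≤ v k := by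
      refine le_ciInf fun m => ?_
      have h1 : v j ≤ g m + L * |Real.sqrt j - Real.sqrt m| := ciInf_le (hbdd j) m
      have htri : |Real.sqrt j - Real.sqrt m| ≤
          |Real.sqrt j - Real.sqrt k| + |Real.sqrt k - Real.sqrt m| :=
        abs_sub_le _ _ _
      nlinarith [abs_nonneg (Real.sqrt j - Real.sqrt m)]
    linarith
  refine ⟨v, fun n => ?_, fun j k => ?_, fun n => ?_⟩
  · have h1 := hle n
    have h2 := hlb n
    have h3 : g n ≤ M := le_of_abs_le (hM n)
    rw [abs_le]; constructor <;> linarith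
  · have h1 := hlip j k
    have h2 := hlip k j
    rw [abs_sub_comm (Real.sqrt k)] at h2
    rw [abs_le]; constructor <;> linarith
  · have h1 := hle n
    have h2 := hge n
    rw [abs_le]
    have he : 0 ≤ e := by
      have := key n n
      simp at this
      linarith
    constructor <;> linarith

theorem lipschitz_dense_in_RO (σ : ℕ → ℂ)
    (hbdd : ∃ M : ℝ, ∀ n, ‖σ n‖ ≤ M)
    (huc : ∀ ε > 0, ∃ δ > 0, ∀ j k : ℕ,
      |Real.sqrt j - Real.sqrt k| ≤ δ → ‖σ j - σ k‖ < ε) :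
    ∀ ε > 0, ∃ y : ℕ → ℂ,
      (∃ C : ℝ, ∀ n, ‖y n‖ ≤ C) ∧
      (∃ L : ℝ, ∀ j k : ℕ,
        ‖y j - y k‖ ≤ L * |Real.sqrt j - Real.sqrt k|) ∧
      (∃ c : ℝ, c < ε ∧ ∀ n, ‖σ n - y n‖ ≤ c) := by
  intro ε hε
  obtain ⟨M, hM⟩ := hbdd
  obtain ⟨δ, hδ, hδε⟩ := huc (ε/3) (by positivity)
  have hM0 : 0 ≤ M := le_trans (norm_nonneg _) (hM 0)
  set L : ℝ := 2 * (M + 1) / δ with hLdef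
  have hL0 : 0 < L := by positivity
  -- key estimate for any real part function
  have keygen : ∀ g : ℕ → ℝ, (∀ n, |g n| ≤ M) →
      (∀ j k : ℕ, |g j - g k| ≤ ‖σ j - σ k‖) →
      ∀ j k : ℕ, g j ≤ g k + ε/3 + L * |Real.sqrt j - Real.sqrt k| := by
    intro g hgb hg j k
    by_cases h : |Real.sqrt j - Real.sqrt k| ≤ δ
    · have h1 : g j - g k ≤ ‖σ j - σ k‖ :=
        le_trans (le_abs_self _) (hg j k)
      have h2 := hδε j k h
      have h3 : 0 ≤ L * |Real.sqrt j - Real.sqrt k| := by positivity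
      linarith
    · push_neg at h
      have h1 : g j ≤ M := le_of_abs_le (hgb j)
      have h2 : -M ≤ g k := neg_le_of_abs_le (hgb k)
      have h4 : L * δ ≤ L * |Real.sqrt j - Real.sqrt k| := by
        apply mul_le_mul_of_nonneg_left h.le hL0.le
      have h5 : L * δ = 2 * (M + 1) := by
        rw [hLdef]; field_simp
      have h6 : 0 < ε / 3 := by positivity
      linarith
  have hreb : ∀ n, |(σ n).re| ≤ M := fun n =>
    le_trans (Complex.abs_re_le_norm _) (hM n)
  have himb : ∀ n, |(σ n).im| ≤ M := fun n =>
    le_trans (Complex.abs_im_le_norm _) (hM n)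
  have hred : ∀ j k : ℕ, |(σ j).re - (σ k).re| ≤ ‖σ j - σ k‖ := by
    intro j k
    have := Complex.abs_re_le_norm (σ j - σ k)
    simpa [Complex.sub_re] using this
  have himd : ∀ j k : ℕ, |(σ j).im - (σ k).im| ≤ ‖σ j - σ k‖ := by
    intro j k
    have := Complex.abs_im_le_norm (σ j - σ k)
    simpa [Complex.sub_im] using this
  obtain ⟨vr, hvrM, hvrL, hvre⟩ := mcshane_aux (fun n => (σ n).re) M (ε/3) L hreb hL0.le
    (keygen _ hreb hred)
  obtain ⟨vi, hviM, hviL, hvie⟩ := mcshane_aux (fun n => (σ n).im) M (ε/3) L himb hL0.le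
    (keygen _ himb himd)
  refine ⟨fun n => ⟨vr n, vi n⟩, ⟨2 * M, fun n => ?_⟩, ⟨2 * L, fun j k => ?_⟩,
    ⟨2 * (ε/3), by linarith, fun n => ?_⟩⟩
  · calc ‖(⟨vr n, vi n⟩ : ℂ)‖ ≤ |vr n| + |vi n| :=
        Complex.norm_le_abs_re_add_abs_im _
      _ ≤ 2 * M := by have := hvrM n; have := hviM n; linarith
  · calc ‖(⟨vr j, vi j⟩ : ℂ) - ⟨vr k, vi k⟩‖
        ≤ |((⟨vr j, vi j⟩ : ℂ) - ⟨vr k, vi k⟩).re| +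
          |((⟨vr j, vi j⟩ : ℂ) - ⟨vr k, vi k⟩).im| :=
        Complex.norm_le_abs_re_add_abs_im _
      _ = |vr j - vr k| + |vi j - vi k| := by simp [Complex.sub_re, Complex.sub_im]
      _ ≤ 2 * L * |Real.sqrt j - Real.sqrt k| := by
          have h1 := hvrL j k; have h2 := hviL j k
          have h3 : |vr j - vr k| + |vi j - vi k| ≤
              L * |Real.sqrt j - Real.sqrt k| + L * |Real.sqrt j - Real.sqrt k| :=
            add_le_add h1 h2
          linarith
  · calc ‖σ n - ⟨vr n, vi n⟩‖
        ≤ |(σ n - ⟨vr n, vi n⟩).re| + |(σ n - ⟨vr n, vi n⟩).im| :=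
        Complex.norm_le_abs_re_add_abs_im _
      _ = |(σ n).re - vr n| + |(σ n).im - vi n| := by simp [Complex.sub_re, Complex.sub_im]
      _ ≤ 2 * (ε/3) := by have := hvre n; have := hvie n; simp at *; linarith
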